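/- arXiv:2105.12642 — 3 statements merged into one kernel-verified Lean document; each statement's English description precedes it below -/
import Mathlib

section
/- Suppose a graded ring quotient argument: let R = ℚ[z₁,…,z_d]/(z₁²,…,z_d²) and let T be a quotient ring of R by a homogeneous ideal K. If the d elements γ_i = z₁⋯ẑ_i⋯z_d (product omitting z_i) have ℚ-linearly independent images in T, then K is contained in the ideal generated by z₁⋯z_d; equivalently T ≅ ℚ[z₁,…,z_d]/(z₁²,…,z_d², z₁⋯z_d) or T ≅ R. -/
open MvPolynomial Finset

namespace LowDegAux

variable {d : ℕ}

/-- indicator exponent of a finset -/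
noncomputable def e (A : Finset (Fin d)) : Fin d →₀ ℕ := ∑ j ∈ A, Finsupp.single j 1

lemma e_apply (A : Finset (Fin d)) (k : Fin d) : e A k = if k ∈ A then 1 else 0 := by
  classical
  simp only [e, Finsupp.finset_sum_apply, Finsupp.single_apply]
  simp

lemma e_support (A : Finset (Fin d)) : (e A).support = A := by
  ext k
  simp [Finsupp.mem_support_iff, e_apply]

lemma e_sqfree (A : Finset (Fin d)) (i : Fin d) : e A i ≤ 1 := by
  rw [e_apply]; split <;> omega

lemma e_degree (A : Finset (Fin d)) : (e A).degree = A.card := by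
  rw [Finsupp.degree_apply]
  rw [e_support, Finset.card_eq_sum_ones A]
  apply Finset.sum_congr rfl
  intro k hk
  rw [e_apply, if_pos hk]

lemma e_inj {A B : Finset (Fin d)} (h : e A = e B) : A = B := by
  rw [← e_support A, ← e_support B, h]

lemma e_union {A B : Finset (Fin d)} (h : Disjoint A B) : e (A ∪ B) = e A + e B := by
  unfold e
  rw [Finset.sum_union h]

lemma sqfree_eq_e {n : Fin d →₀ ℕ} (hn : ∀ i, n i ≤ 1) : n = e n.support := by
  ext k
  rw [e_apply]
  by_cases hk : k ∈ n.support
  · rw [if_pos hk]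
    have := Finsupp.mem_support_iff.mp hk
    have := hn k
    omega
  · rw [if_neg hk]
    exact Finsupp.notMem_support_iff.mp hk

lemma prodX (A : Finset (Fin d)) :
    (∏ j ∈ A, X j : MvPolynomial (Fin d) ℚ) = monomial (e A) 1 := by
  classical
  induction A using Finset.induction with
  | empty => simp [e, monomial_zero']
  | @insert a s hj ih =>
      rw [Finset.prod_insert hj, ih]
      rw [show (X a : MvPolynomial (Fin d) ℚ) = monomial (Finsupp.single a 1) 1 from rfl]
      rw [monomial_mul, one_mul]
      show _ = monomial (∑ j ∈ insert a s, Finsupp.single j 1) 1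
      rw [Finset.sum_insert hj]
      rfl

/-- squarefree coefficients vanish on the ideal of squares -/
lemma coeff_eq_zero_of_mem_J {n : Fin d →₀ ℕ} (hn : ∀ i, n i ≤ 1)
    {f : MvPolynomial (Fin d) ℚ}
    (hf : f ∈ Ideal.span (Set.range fun i : Fin d => (X i : MvPolynomial (Fin d) ℚ) ^ 2)) :
    coeff n f = 0 := by
  have hf' : f ∈ Submodule.span (MvPolynomial (Fin d) ℚ)
      (Set.range fun i : Fin d => (X i : MvPolynomial (Fin d) ℚ) ^ 2) := hf
  rw [Submodule.mem_span_range_iff_exists_fun] at hf'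
  obtain ⟨c, hc⟩ := hf'
  rw [← hc, coeff_sum]
  apply Finset.sum_eq_zero
  intro i _
  rw [smul_eq_mul, X_pow_eq_monomial, coeff_mul_monomial']
  rw [if_neg]
  intro h
  have h1 := h i
  have h2 := hn i
  simp [Finsupp.single_apply] at h1
  omega

lemma mem_J_of_sqfree_coeff_zero {f : MvPolynomial (Fin d) ℚ}
    (h : ∀ n : Fin d →₀ ℕ, (∀ i, n i ≤ 1) → coeff n f = 0) :
    f ∈ Ideal.span (Set.range fun i : Fin d => (X i : MvPolynomial (Fin d) ℚ) ^ 2) := by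
  classical
  rw [f.as_sum]
  apply Ideal.sum_mem
  intro m hm
  have hmc : coeff m f ≠ 0 := MvPolynomial.mem_support_iff.mp hm
  have hnot : ¬ ∀ i, m i ≤ 1 := fun hh => hmc (h m hh)
  push_neg at hnot
  obtain ⟨i, hi⟩ := hnot
  have hle : Finsupp.single i 2 ≤ m := by
    rw [Finsupp.single_le_iff]; omega
  have heq : monomial m (coeff m f)
      = monomial (m - Finsupp.single i 2) (coeff m f) * (X i) ^ 2 := by
    rw [X_pow_eq_monomial, monomial_mul, mul_one, tsub_add_cancel_of_le hle]
  rw [heq]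
  exact Ideal.mul_mem_left _ _ (Ideal.subset_span ⟨i, rfl⟩)

end LowDegAux

open LowDegAux

/-- Let R = ℚ[z₁,…,z_d]/(z₁²,…,z_d²) and let K be a homogeneous ideal with K ∩ R₀ = 0,
presented by an ideal K of ℚ[z₁,…,z_d] containing the squares and stable under taking
homogeneous components.  If the images of the γ_i = z₁⋯ẑ_i⋯z_d in R/K are ℚ-linearly
independent, then every homogeneous element of K of degree ℓ < d − 1 is zero in R,
i.e. lies in (z₁²,…,z_d²). -/
theorem homogeneous_ideal_low_degree_zero (d : ℕ) (hd : 2 ≤ d)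
    (K : Ideal (MvPolynomial (Fin d) ℚ))
    (hJK : Ideal.span (Set.range fun i : Fin d => (X i : MvPolynomial (Fin d) ℚ) ^ 2) ≤ K)
    (hhom : ∀ f ∈ K, ∀ n : ℕ, homogeneousComponent n f ∈ K)
    (hK0 : ∀ f ∈ K, f.IsHomogeneous 0 → f = 0)
    (hind : LinearIndependent ℚ
      (fun i : Fin d => Ideal.Quotient.mk K (∏ j ∈ Finset.univ.erase i, (X j : MvPolynomial (Fin d) ℚ)))) :
    ∀ ℓ : ℕ, ℓ < d - 1 → ∀ f ∈ K, f.IsHomogeneous ℓ →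
      f ∈ Ideal.span (Set.range fun i : Fin d => (X i : MvPolynomial (Fin d) ℚ) ^ 2) := by
  classical
  intro ℓ hℓ f hfK hfhom
  by_contra hfJ
  have hex : ∃ n : Fin d →₀ ℕ, (∀ i, n i ≤ 1) ∧ coeff n f ≠ 0 := by
    by_contra h
    push_neg at h
    exact hfJ (mem_J_of_sqfree_coeff_zero (fun n hn => h n hn))
  obtain ⟨m, hm1, hmc⟩ := hex
  set S := m.support with hS
  have hmS : m = e S := sqfree_eq_e hm1
  have hdegm : m.degree = ℓ := by
    have := hfhom hmc
    rwa [Finsupp.degree_eq_weight_one]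
  have hScard : S.card = ℓ := by
    rw [hmS, e_degree] at hdegm; exact hdegm
  have hcard_compl : (Finset.univ \ S).card = d - ℓ := by
    rw [Finset.card_sdiff_of_subset (Finset.subset_univ S), Finset.card_univ, Fintype.card_fin, hScard]
  have hne : (Finset.univ \ S).Nonempty := by
    rw [← Finset.card_pos, hcard_compl]; omega
  obtain ⟨i, hi⟩ := hne
  have hiS : i ∉ S := (Finset.mem_sdiff.mp hi).2
  set T := (Finset.univ \ S).erase i with hT
  have hTcard : T.card = d - ℓ - 1 := by
    rw [hT, Finset.card_erase_of_mem hi, hcard_compl]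
  set g := f * monomial (e T) (1 : ℚ) with hg
  have hgK : g ∈ K := K.mul_mem_right _ hfK
  have hghom : g.IsHomogeneous (d - 1) := by
    have h1 : (monomial (e T) (1 : ℚ)).IsHomogeneous T.card :=
      isHomogeneous_monomial _ (e_degree T)
    have h2 := hfhom.mul h1
    rw [hTcard] at h2
    have h3 : ℓ + (d - ℓ - 1) = d - 1 := by omega
    rwa [h3] at h2
  set c : Fin d → ℚ := fun k => coeff (e (Finset.univ.erase k)) g with hcdef
  set s := ∑ k : Fin d,
      MvPolynomial.C (c k) * ∏ j ∈ Finset.univ.erase k, (X j : MvPolynomial (Fin d) ℚ) with hs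
  have key : g - s ∈ Ideal.span
      (Set.range fun i : Fin d => (X i : MvPolynomial (Fin d) ℚ) ^ 2) := by
    apply mem_J_of_sqfree_coeff_zero
    intro n hn
    rw [coeff_sub, hs, coeff_sum]
    simp only [prodX, coeff_C_mul, coeff_monomial]
    by_cases hcase : ∃ k : Fin d, e (Finset.univ.erase k) = n
    · obtain ⟨k0, hk0⟩ := hcase
      have hsum : (∑ k : Fin d, c k * (if e (Finset.univ.erase k) = n then 1 else 0)) = c k0 := by
        rw [Finset.sum_eq_single k0]
        · rw [if_pos hk0, mul_one]
        · intro k _ hkk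
          rw [if_neg, mul_zero]
          intro heq
          have herase := e_inj (heq.trans hk0.symm)
          have hk' : k ∈ Finset.univ.erase k0 :=
            Finset.mem_erase.mpr ⟨hkk, Finset.mem_univ k⟩
          rw [← herase] at hk'
          exact (Finset.mem_erase.mp hk').1 rfl
        · intro habs; exact absurd (Finset.mem_univ k0) habs
      rw [hsum, sub_eq_zero, ← hk0, hcdef]
    · push_neg at hcase
      have h0 : coeff n g = 0 := by
        by_contra h0
        have hdeg : n.degree = d - 1 := by
          have := hghom h0
          rwa [Finsupp.degree_eq_weight_one]
        have hnsup : n.support.card = d - 1 := by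
          rw [← e_degree n.support, ← sqfree_eq_e hn]; exact hdeg
        have hone : (Finset.univ \ n.support).card = 1 := by
          rw [Finset.card_sdiff_of_subset (Finset.subset_univ _), Finset.card_univ, Fintype.card_fin,
            hnsup]
          omega
        obtain ⟨k, hk⟩ := Finset.card_eq_one.mp hone
        apply hcase k
        have hsup : n.support = Finset.univ.erase k := by
          have h1 : Finset.univ \ (Finset.univ \ n.support) = Finset.univ \ ({k} : Finset (Fin d)) := by
            rw [hk]
          rw [Finset.sdiff_sdiff_self_left, Finset.univ_inter] at h1
          rw [h1, Finset.erase_eq]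
        rw [sqfree_eq_e hn, hsup]
      rw [h0, zero_sub, neg_eq_zero]
      apply Finset.sum_eq_zero
      intro k _
      rw [if_neg (hcase k), mul_zero]
  have hsK : s ∈ K := by
    have hrw : s = g - (g - s) := by ring
    rw [hrw]
    exact K.sub_mem hgK (hJK key)
  have hq : ∑ k : Fin d, c k • Ideal.Quotient.mk K
      (∏ j ∈ Finset.univ.erase k, (X j : MvPolynomial (Fin d) ℚ)) = 0 := by
    have h0 : Ideal.Quotient.mk K s = 0 := Ideal.Quotient.eq_zero_iff_mem.mpr hsK
    rw [← h0, hs, map_sum]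
    apply Finset.sum_congr rfl
    intro k _
    rw [← MvPolynomial.smul_eq_C_mul, ← Ideal.Quotient.mkₐ_eq_mk ℚ K, map_smul]
  have hczero := Fintype.linearIndependent_iff.mp hind c hq
  have hci : c i = coeff m f := by
    have hdisj : Disjoint S T :=
      Finset.disjoint_left.mpr fun x hxS hxT =>
        (Finset.mem_sdiff.mp (Finset.mem_of_mem_erase hxT)).2 hxS
    have hunion : S ∪ T = Finset.univ.erase i := by
      ext x
      simp only [hT, Finset.mem_union, Finset.mem_erase, Finset.mem_sdiff,
        Finset.mem_univ, true_and, and_true]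
      constructor
      · rintro (h | ⟨hxi, _⟩)
        · exact fun heq => hiS (heq ▸ h)
        · exact hxi
      · intro hxi
        by_cases hxS : x ∈ S
        · exact Or.inl hxS
        · exact Or.inr ⟨hxi, hxS⟩
    have heq2 : e (Finset.univ.erase i) = e S + e T := by
      rw [← hunion, e_union hdisj]
    have hle2 : e T ≤ e (Finset.univ.erase i) := by
      rw [heq2]; exact le_add_self
    rw [hcdef]
    show coeff (e (Finset.univ.erase i)) g = coeff m f
    rw [hg, coeff_mul_monomial', if_pos hle2, heq2, add_tsub_cancel_right, mul_one, ← hmS]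
  exact hmc (hci ▸ hczero i)
end

section
/- Let d ≥ 2 and R = ℚ[z₁,…,z_d]/(z₁²,…,z_d²). Suppose K is a homogeneous ideal of R such that the images of γ_i = z₁⋯ẑ_i⋯z_d (i = 1,…,d) in R/K are ℚ-linearly independent. Then for every ℓ < d and every degree-ℓ homogeneous element x ∈ K that is a ℚ-linear combination of squarefree monomials z_I with |I| = ℓ and I a proper subset, x = 0. -/
open MvPolynomial

/-- Let R = ℚ[z₁,…,z_d]/(z₁²,…,z_d²) and K a homogeneous ideal (presented by an ideal of
ℚ[z₁,…,z_d] containing the squares and stable under homogeneous components) such that the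
images of the γ_i = z₁⋯ẑ_i⋯z_d in R/K are ℚ-linearly independent.  Then for every ℓ < d,
every element of K which is a ℚ-linear combination of squarefree monomials z_I with |I| = ℓ
and I a proper subset is zero in R, i.e. lies in (z₁²,…,z_d²). -/
theorem homogeneous_ideal_squarefree_zero (d : ℕ) (hd : 2 ≤ d)
    (K : Ideal (MvPolynomial (Fin d) ℚ))
    (hJK : Ideal.span (Set.range fun i : Fin d => (X i : MvPolynomial (Fin d) ℚ) ^ 2) ≤ K)
    (hhom : ∀ f ∈ K, ∀ n : ℕ, homogeneousComponent n f ∈ K)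
    (hind : LinearIndependent ℚ
      (fun i : Fin d => Ideal.Quotient.mk K (∏ j ∈ Finset.univ.erase i, (X j : MvPolynomial (Fin d) ℚ))))
    (ℓ : ℕ) (hℓ : ℓ < d) (a : Finset (Fin d) → ℚ)
    (ha : ∀ I : Finset (Fin d), a I ≠ 0 → I.card = ℓ ∧ I ≠ Finset.univ)
    (hx : (∑ I : Finset (Fin d), C (a I) * ∏ i ∈ I, (X i : MvPolynomial (Fin d) ℚ)) ∈ K) :
    (∑ I : Finset (Fin d), C (a I) * ∏ i ∈ I, (X i : MvPolynomial (Fin d) ℚ)) ∈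
      Ideal.span (Set.range fun i : Fin d => (X i : MvPolynomial (Fin d) ℚ) ^ 2) := by
  classical
  set S := Ideal.span (Set.range fun i : Fin d => (X i : MvPolynomial (Fin d) ℚ) ^ 2) with hS
  have lemA : ∀ I J : Finset (Fin d), ¬ Disjoint I J →
      (∏ i ∈ I, (X i : MvPolynomial (Fin d) ℚ)) * (∏ j ∈ J, X j) ∈ S := by
    intro I J h
    obtain ⟨j, hjI, hjJ⟩ := Finset.not_disjoint_iff.mp h
    rw [← Finset.mul_prod_erase _ _ hjI, ← Finset.mul_prod_erase _ _ hjJ]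
    have heq : (X j * ∏ i ∈ I.erase j, X i) *
        (X j * ∏ i ∈ J.erase j, (X i : MvPolynomial (Fin d) ℚ))
        = (X j ^ 2) * ((∏ i ∈ I.erase j, X i) * ∏ i ∈ J.erase j, X i) := by ring
    rw [heq]
    exact Ideal.mul_mem_right _ _ (Ideal.subset_span ⟨j, rfl⟩)
  have key : ∀ I₀ : Finset (Fin d), a I₀ = 0 := by
    intro I₀
    by_contra hne
    obtain ⟨hcard, hprop⟩ := ha I₀ hne
    obtain ⟨i, hi⟩ : ∃ i, i ∉ I₀ := by
      by_contra h; push_neg at h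
      exact hprop (Finset.eq_univ_iff_forall.mpr h)
    set E : Finset (Fin d) := insert i I₀ with hE
    have hiE : i ∈ E := Finset.mem_insert_self _ _
    have hcardE : E.card = ℓ + 1 := by
      rw [hE, Finset.card_insert_of_notMem hi, hcard]
    have hunion : ∀ j ∈ E, (E.erase j) ∪ Eᶜ = Finset.univ.erase j := by
      intro j hj
      ext k
      simp only [Finset.mem_union, Finset.mem_erase, Finset.mem_compl, Finset.mem_univ, and_true]
      constructor
      · rintro (⟨hk, _⟩ | hk)
        · exact hk
        · exact fun h => hk (h ▸ hj)
      · intro hk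
        by_cases hkE : k ∈ E
        · exact Or.inl ⟨hk, hkE⟩
        · exact Or.inr hkE
    have hdisj : ∀ j : Fin d, Disjoint (E.erase j) Eᶜ :=
      fun j => Disjoint.mono_left (Finset.erase_subset _ _) disjoint_compl_right
    set zJ : MvPolynomial (Fin d) ℚ := ∏ j ∈ Eᶜ, X j with hzJ
    set G : Finset (Finset (Fin d)) := Finset.image E.erase E with hGdef
    have hinj : ∀ x ∈ E, ∀ y ∈ E, E.erase x = E.erase y → x = y := by
      intro x hx' y hy h
      by_contra hxy
      have hmem : x ∈ E.erase y := Finset.mem_erase.mpr ⟨hxy, hx'⟩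
      rw [← h] at hmem
      exact Finset.notMem_erase x E hmem
    have hsum : (∑ I : Finset (Fin d), C (a I) * ∏ i ∈ I, (X i : MvPolynomial (Fin d) ℚ)) * zJ
        = (∑ I ∈ G, (C (a I) * ∏ i ∈ I, (X i : MvPolynomial (Fin d) ℚ)) * zJ)
          + ∑ I ∈ Finset.univ \ G, (C (a I) * ∏ i ∈ I, (X i : MvPolynomial (Fin d) ℚ)) * zJ := by
      rw [Finset.sum_mul, ← Finset.sum_sdiff (Finset.subset_univ G)]
      ring
    have himage : (∑ I ∈ G, (C (a I) * ∏ i ∈ I, (X i : MvPolynomial (Fin d) ℚ)) * zJ)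
        = ∑ j ∈ E, C (a (E.erase j)) * ∏ k ∈ Finset.univ.erase j, (X k : MvPolynomial (Fin d) ℚ) := by
      rw [hGdef, Finset.sum_image hinj]
      refine Finset.sum_congr rfl fun j hj => ?_
      rw [mul_assoc, hzJ, ← Finset.prod_union (hdisj j), hunion j hj]
    have hrest : (∑ I ∈ Finset.univ \ G, (C (a I) * ∏ i ∈ I, (X i : MvPolynomial (Fin d) ℚ)) * zJ) ∈ S := by
      refine Ideal.sum_mem _ fun I hI => ?_
      by_cases haI : a I = 0
      · rw [haI]; simp
      · have hdis : ¬ Disjoint I Eᶜ := by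
          intro hdis
          have hIE : I ⊆ E := by
            intro k hk
            by_contra hkE
            exact Finset.disjoint_left.mp hdis hk (Finset.mem_compl.mpr hkE)
          obtain ⟨hcardI, _⟩ := ha I haI
          have hcardd : (E \ I).card = 1 := by
            rw [Finset.card_sdiff_of_subset hIE, hcardE, hcardI]; omega
          obtain ⟨j, hj⟩ := Finset.card_eq_one.mp hcardd
          have hjE : j ∈ E := by
            have : j ∈ E \ I := by rw [hj]; exact Finset.mem_singleton_self j
            exact (Finset.mem_sdiff.mp this).1
          have hIeq : I = E.erase j := by
            ext k
            simp only [Finset.mem_erase]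
            constructor
            · intro hk
              refine ⟨?_, hIE hk⟩
              intro hkj
              have : j ∈ E \ I := by rw [hj]; exact Finset.mem_singleton_self j
              exact (Finset.mem_sdiff.mp this).2 (hkj ▸ hk)
            · rintro ⟨hkj, hkE⟩
              by_contra hk
              have : k ∈ E \ I := Finset.mem_sdiff.mpr ⟨hkE, hk⟩
              rw [hj, Finset.mem_singleton] at this
              exact hkj this
          have : I ∈ G := Finset.mem_image.mpr ⟨j, hjE, hIeq.symm⟩
          exact (Finset.mem_sdiff.mp hI).2 this
        rw [mul_assoc]
        exact Ideal.mul_mem_left _ _ (lemA I Eᶜ hdis)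
    have hkey : (∑ j ∈ E, C (a (E.erase j)) *
        ∏ k ∈ Finset.univ.erase j, (X k : MvPolynomial (Fin d) ℚ)) ∈ K := by
      have h1 : (∑ I : Finset (Fin d), C (a I) * ∏ i ∈ I, (X i : MvPolynomial (Fin d) ℚ)) * zJ ∈ K :=
        Ideal.mul_mem_right _ _ hx
      have h2 : (∑ j ∈ E, C (a (E.erase j)) *
          ∏ k ∈ Finset.univ.erase j, (X k : MvPolynomial (Fin d) ℚ))
          = (∑ I : Finset (Fin d), C (a I) * ∏ i ∈ I, (X i : MvPolynomial (Fin d) ℚ)) * zJ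
            - ∑ I ∈ Finset.univ \ G, (C (a I) * ∏ i ∈ I, (X i : MvPolynomial (Fin d) ℚ)) * zJ := by
        rw [hsum, himage]; ring
      rw [h2]
      exact Ideal.sub_mem _ h1 (hJK hrest)
    have hsmul : ∀ (c : ℚ) (p : MvPolynomial (Fin d) ℚ),
        c • Ideal.Quotient.mk K p = Ideal.Quotient.mk K (C c * p) := by
      intro c p
      rw [← smul_eq_C_mul, ← Ideal.Quotient.mkₐ_eq_mk ℚ K, map_smul]
    have h0 : (∑ j ∈ E, a (E.erase j) •
        Ideal.Quotient.mk K (∏ k ∈ Finset.univ.erase j, (X k : MvPolynomial (Fin d) ℚ))) = 0 := by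
      have h2 : Ideal.Quotient.mk K (∑ j ∈ E, C (a (E.erase j)) *
          ∏ k ∈ Finset.univ.erase j, (X k : MvPolynomial (Fin d) ℚ)) = 0 :=
        Ideal.Quotient.eq_zero_iff_mem.mpr hkey
      rw [map_sum] at h2
      rw [← h2]
      exact Finset.sum_congr rfl fun j _ => hsmul _ _
    have hlast := linearIndependent_iff'.mp hind E (fun j => a (E.erase j)) h0 i hiE
    simp only [hE, Finset.erase_insert hi] at hlast
    exact hne hlast
  have hzero : (∑ I : Finset (Fin d), C (a I) * ∏ i ∈ I, (X i : MvPolynomial (Fin d) ℚ)) = 0 :=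
    Finset.sum_eq_zero fun I _ => by rw [key I, map_zero, zero_mul]
  rw [hzero]
  exact Ideal.zero_mem _
end

section
/- Let A be a commutative ℚ-algebra and x₁,…,x_d ∈ A with x_i² = 0 for all i and x₁⋯x_d = 0. If additionally the d products γ_i = ∏_{j≠i} x_j are ℚ-linearly independent in A, then the ℚ-subalgebra generated by x₁,…,x_d is isomorphic as a ℚ-algebra to ℚ[z₁,…,z_d]/(z₁²,…,z_d², z₁⋯z_d). -/
open MvPolynomial

section Aux

variable {d : ℕ} {A : Type*} [CommRing A] [Algebra ℚ A]

private lemma prod_prod_eq_zero {x : Fin d → A} (hsq : ∀ i, x i ^ 2 = 0)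
    {S T : Finset (Fin d)} {j : Fin d} (hjS : j ∈ S) (hjT : j ∈ T) :
    (∏ i ∈ S, x i) * ∏ i ∈ T, x i = 0 := by
  rw [← Finset.mul_prod_erase _ _ hjS, ← Finset.mul_prod_erase _ _ hjT,
    mul_mul_mul_comm, ← sq, hsq, zero_mul]

/-- Key lemma: all proper squarefree monomials in the `x i` are linearly independent. -/
private lemma coeffs_eq_zero (x : Fin d → A)
    (hsq : ∀ i, x i ^ 2 = 0) (htop : ∏ i : Fin d, x i = 0)
    (hind : LinearIndependent ℚ (fun i : Fin d => ∏ j ∈ Finset.univ.erase i, x j))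
    (c : Finset (Fin d) → ℚ) (hcu : c Finset.univ = 0)
    (hc : ∑ S : Finset (Fin d), c S • ∏ i ∈ S, x i = 0) :
    ∀ S, c S = 0 := by
  suffices h : ∀ n, ∀ S : Finset (Fin d), S.card = n → c S = 0 by
    exact fun S => h S.card S rfl
  intro n
  induction n using Nat.strong_induction_on with
  | _ n IH =>
    intro S hScard
    rcases eq_or_ne S Finset.univ with rfl | hSu
    · exact hcu
    obtain ⟨i, hi⟩ : ∃ i, i ∉ S := by
      by_contra h; push_neg at h
      exact hSu (Finset.eq_univ_iff_forall.mpr h)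
    set U : Finset (Fin d) := insert i S with hU
    have hiU : i ∈ U := Finset.mem_insert_self i S
    have hUcard : U.card = n + 1 := by
      rw [hU, Finset.card_insert_of_notMem hi, hScard]
    -- multiply the relation by ∏_{j ∈ Uᶜ} x j
    have h2 : ∑ S' : Finset (Fin d), c S' • ((∏ j ∈ S', x j) * ∏ j ∈ Uᶜ, x j) = 0 := by
      simp_rw [← smul_mul_assoc]
      rw [← Finset.sum_mul, hc, zero_mul]
    -- the only surviving terms are indexed by `U.erase j`, `j ∈ U`
    have h3 : ∑ S' : Finset (Fin d), c S' • ((∏ j ∈ S', x j) * ∏ j ∈ Uᶜ, x j)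
        = ∑ S' ∈ U.image (fun j => U.erase j),
            c S' • ((∏ j ∈ S', x j) * ∏ j ∈ Uᶜ, x j) := by
      refine (Finset.sum_subset (Finset.subset_univ _) ?_).symm
      intro S' _ hS'
      by_cases hsub : S' ⊆ U
      · rcases eq_or_ne S' U with rfl | hne
        · rw [Finset.prod_mul_prod_compl, htop, smul_zero]
        · have hlt : S' ⊂ U := Finset.ssubset_iff_subset_ne.mpr ⟨hsub, hne⟩
          have hcardlt : S'.card < n + 1 := hUcard ▸ Finset.card_lt_card hlt
          rcases eq_or_ne S'.card n with hcn | hcn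
          · -- S' is an erase, contradiction with hS'
            exfalso
            have hdc : (U \ S').card = 1 := by
              rw [Finset.card_sdiff_of_subset hsub, hUcard, hcn]; omega
            obtain ⟨j, hj⟩ := Finset.card_eq_one.mp hdc
            have hjU : j ∈ U := by
              have : j ∈ U \ S' := hj ▸ Finset.mem_singleton_self j
              exact (Finset.mem_sdiff.mp this).1
            refine hS' (Finset.mem_image.mpr ⟨j, hjU, ?_⟩)
            rw [Finset.erase_eq, ← hj, Finset.sdiff_sdiff_eq_self hsub]
          · rw [IH S'.card (by omega) S' rfl, zero_smul]
      · obtain ⟨j, hjS', hjU⟩ := Finset.not_subset.mp hsub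
        rw [prod_prod_eq_zero hsq hjS' (Finset.mem_compl.mpr hjU), smul_zero]
    have h4 : ∑ S' ∈ U.image (fun j => U.erase j),
          c S' • ((∏ j ∈ S', x j) * ∏ j ∈ Uᶜ, x j)
        = ∑ j ∈ U, c (U.erase j) • ((∏ k ∈ U.erase j, x k) * ∏ k ∈ Uᶜ, x k) :=
      Finset.sum_image (fun a ha b hb hab => Finset.erase_injOn U ha hb hab)
    have h5 : ∀ j ∈ U, (∏ k ∈ U.erase j, x k) * ∏ k ∈ Uᶜ, x k
        = ∏ k ∈ Finset.univ.erase j, x k := by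
      intro j hj
      rw [← Finset.prod_union]
      · apply Finset.prod_congr _ (fun _ _ => rfl)
        ext k
        simp only [Finset.mem_union, Finset.mem_erase, Finset.mem_compl]
        constructor
        · rintro (⟨hkj, _⟩ | hk)
          · exact ⟨hkj, Finset.mem_univ k⟩
          · exact ⟨fun h => hk (h ▸ hj), Finset.mem_univ k⟩
        · rintro ⟨hkj, -⟩
          by_cases hkU : k ∈ U
          · exact Or.inl ⟨hkj, hkU⟩
          · exact Or.inr hkU
      · exact Finset.disjoint_left.mpr (fun k hk hk' =>
          (Finset.mem_compl.mp hk') (Finset.mem_of_mem_erase hk))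
    -- assemble a relation among the γ_j
    set g : Fin d → ℚ := fun j => if j ∈ U then c (U.erase j) else 0 with hg
    have h6 : ∑ j : Fin d, g j • ∏ k ∈ Finset.univ.erase j, x k = 0 := by
      rw [← Finset.sum_subset (Finset.subset_univ U)
        (fun j _ hj => by simp [hg, if_neg hj])]
      calc ∑ j ∈ U, g j • ∏ k ∈ Finset.univ.erase j, x k
          = ∑ j ∈ U, c (U.erase j) • ((∏ k ∈ U.erase j, x k) * ∏ k ∈ Uᶜ, x k) := by
            refine Finset.sum_congr rfl (fun j hj => ?_)
            rw [h5 j hj, hg]; simp [if_pos hj]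
        _ = 0 := by rw [← h4, ← h3, h2]
    have := Fintype.linearIndependent_iff.mp hind g h6 i
    rw [hg] at this
    simp only [if_pos hiU] at this
    rwa [hU, Finset.erase_insert hi] at this

variable (d) in
private noncomputable def relIdeal : Ideal (MvPolynomial (Fin d) ℚ) :=
  Ideal.span
    ((Set.range fun i : Fin d => (X i : MvPolynomial (Fin d) ℚ) ^ 2) ∪
      {∏ i : Fin d, (X i : MvPolynomial (Fin d) ℚ)})

private lemma sq_mem_relIdeal (i : Fin d) : (X i : MvPolynomial (Fin d) ℚ) ^ 2 ∈ relIdeal d :=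
  Ideal.subset_span (Or.inl ⟨i, rfl⟩)

private lemma prod_mem_relIdeal : (∏ i : Fin d, (X i : MvPolynomial (Fin d) ℚ)) ∈ relIdeal d :=
  Ideal.subset_span (Or.inr rfl)

private lemma monomial_mem_of_two_le (e : Fin d →₀ ℕ) (a : ℚ) (i : Fin d) (h : 2 ≤ e i) :
    monomial e a ∈ relIdeal d := by
  have hsub : e - Finsupp.single i 2 + Finsupp.single i 2 = e := by
    ext j
    rcases eq_or_ne j i with rfl | hj
    · simp only [Finsupp.add_apply, Finsupp.tsub_apply, Finsupp.single_eq_same]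
      omega
    · simp [Finsupp.single_eq_of_ne' (Ne.symm hj)]
  have heq : (monomial e a : MvPolynomial (Fin d) ℚ)
      = monomial (e - Finsupp.single i 2) a * (X i) ^ 2 := by
    rw [X_pow_eq_monomial, monomial_mul, mul_one, hsub]
  rw [heq]
  exact Ideal.mul_mem_left _ _ (sq_mem_relIdeal i)

private lemma monomial_mem_of_support_univ (e : Fin d →₀ ℕ) (a : ℚ)
    (h : e.support = Finset.univ) : monomial e a ∈ relIdeal d := by
  have heq : (monomial e a : MvPolynomial (Fin d) ℚ)
      = (C a * ∏ i : Fin d, (X i) ^ (e i - 1)) * ∏ i : Fin d, X i := by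
    rw [monomial_eq, Finsupp.prod, h, mul_assoc, ← Finset.prod_mul_distrib]
    congr 1
    refine Finset.prod_congr rfl (fun i _ => ?_)
    have hi : 1 ≤ e i := by
      have : i ∈ e.support := h ▸ Finset.mem_univ i
      exact Nat.one_le_iff_ne_zero.mpr (Finsupp.mem_support_iff.mp this)
    rw [← pow_succ]
    congr 1
    omega
  rw [heq]
  exact Ideal.mul_mem_left _ _ prod_mem_relIdeal

private lemma prod_X_eq (S : Finset (Fin d)) :
    (monomial (∑ i ∈ S, Finsupp.single i 1) 1 : MvPolynomial (Fin d) ℚ) = ∏ i ∈ S, X i := by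
  classical
  induction S using Finset.induction with
  | empty => simp
  | @insert a s hnot ih =>
    have hX : (X a : MvPolynomial (Fin d) ℚ) = monomial (Finsupp.single a 1) 1 := by
      rw [← X_pow_eq_monomial, pow_one]
    rw [Finset.prod_insert hnot, Finset.sum_insert hnot, ← ih, hX, monomial_mul, one_mul]

private lemma monomial_squarefree_eq (e : Fin d →₀ ℕ) (a : ℚ) (h : ∀ i, e i ≤ 1) :
    (monomial e a : MvPolynomial (Fin d) ℚ) = a • ∏ i ∈ e.support, X i := by
  rw [← prod_X_eq]
  have he : (∑ i ∈ e.support, Finsupp.single i 1) = e := by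
    conv_rhs => rw [← Finsupp.sum_single e]
    rw [Finsupp.sum]
    refine Finset.sum_congr rfl (fun i hi => ?_)
    have : e i = 1 :=
      le_antisymm (h i) (Nat.one_le_iff_ne_zero.mpr (Finsupp.mem_support_iff.mp hi))
    rw [this]
  rw [he, smul_monomial, smul_eq_mul, mul_one]

/-- every polynomial decomposes as (ideal element) + (combination of proper squarefree
monomials) -/
private lemma exists_decomposition (p : MvPolynomial (Fin d) ℚ) :
    ∃ c : Finset (Fin d) → ℚ, c Finset.univ = 0 ∧
      p - (∑ S : Finset (Fin d), c S • ∏ i ∈ S, X i) ∈ relIdeal d := by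
  classical
  set ν : Finset (Fin d) → MvPolynomial (Fin d) ℚ :=
    fun S => if S = Finset.univ then 0 else ∏ i ∈ S, X i with hν
  set M : Submodule ℚ (MvPolynomial (Fin d) ℚ) :=
    (relIdeal d).restrictScalars ℚ ⊔ Submodule.span ℚ (Set.range ν) with hM
  have hmono : ∀ (e : Fin d →₀ ℕ) (a : ℚ), (monomial e a : MvPolynomial (Fin d) ℚ) ∈ M := by
    intro e a
    by_cases h2 : ∃ i, 2 ≤ e i
    · obtain ⟨i, hi⟩ := h2
      exact Submodule.mem_sup_left (monomial_mem_of_two_le e a i hi)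
    by_cases hsup : e.support = Finset.univ
    · exact Submodule.mem_sup_left (monomial_mem_of_support_univ e a hsup)
    · push_neg at h2
      have h1 : ∀ i, e i ≤ 1 := fun i => by have := h2 i; omega
      rw [monomial_squarefree_eq e a h1]
      refine Submodule.mem_sup_right (Submodule.smul_mem _ _ ?_)
      have : ∏ i ∈ e.support, (X i : MvPolynomial (Fin d) ℚ) = ν e.support := by
        rw [hν]; simp [if_neg hsup]
      rw [this]
      exact Submodule.subset_span ⟨e.support, rfl⟩
  have hpM : p ∈ M := by
    rw [p.as_sum]
    exact Submodule.sum_mem _ (fun e _ => hmono e (coeff e p))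
  rw [hM, Submodule.mem_sup] at hpM
  obtain ⟨q, hq, r, hr, hqr⟩ := hpM
  obtain ⟨c, hcr⟩ := (Submodule.mem_span_range_iff_exists_fun ℚ).mp hr
  refine ⟨fun S => if S = Finset.univ then 0 else c S, if_pos rfl, ?_⟩
  have hre : ∑ S : Finset (Fin d),
      (if S = Finset.univ then 0 else c S) • ∏ i ∈ S, (X i : MvPolynomial (Fin d) ℚ) = r := by
    rw [← hcr]
    refine Finset.sum_congr rfl (fun S _ => ?_)
    rcases eq_or_ne S Finset.univ with rfl | hS
    · simp [hν]
    · simp [hν, if_neg hS]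
  rw [hre, ← hqr, add_sub_cancel_right]
  exact hq

end Aux

/-- Let A be a commutative ℚ-algebra and x₁,…,x_d ∈ A with x_i² = 0, x₁⋯x_d = 0, and
the γ_i = ∏_{j≠i} x_j linearly independent over ℚ.  Then the kernel of the evaluation
map ℚ[z₁,…,z_d] → A, z_i ↦ x_i, is exactly (z₁²,…,z_d², z₁⋯z_d); hence the natural
surjection ℚ[z₁,…,z_d]/(z₁²,…,z_d², z₁⋯z_d) → ℚ[x₁,…,x_d] ⊆ A is an isomorphism. -/
theorem subalgebra_iso_of_relations (d : ℕ) (hd : 1 ≤ d)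
    (A : Type*) [CommRing A] [Algebra ℚ A] (x : Fin d → A)
    (hsq : ∀ i, x i ^ 2 = 0) (htop : ∏ i : Fin d, x i = 0)
    (hind : LinearIndependent ℚ (fun i : Fin d => ∏ j ∈ Finset.univ.erase i, x j)) :
    RingHom.ker (aeval (R := ℚ) x).toRingHom =
      Ideal.span
        ((Set.range fun i : Fin d => (X i : MvPolynomial (Fin d) ℚ) ^ 2) ∪
          {∏ i : Fin d, (X i : MvPolynomial (Fin d) ℚ)}) := by
  have hle : relIdeal d ≤ RingHom.ker (aeval (R := ℚ) x).toRingHom := by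
    rw [relIdeal, Ideal.span_le]
    rintro f (⟨i, rfl⟩ | hf)
    · simp only [SetLike.mem_coe, RingHom.mem_ker, AlgHom.toRingHom_eq_coe,
        RingHom.coe_coe, map_pow, aeval_X]
      exact hsq i
    · simp only [Set.mem_singleton_iff] at hf
      subst hf
      simp only [SetLike.mem_coe, RingHom.mem_ker, AlgHom.toRingHom_eq_coe,
        RingHom.coe_coe, map_prod, aeval_X]
      exact htop
  refine le_antisymm ?_ hle
  intro p hp
  have hp0 : aeval (R := ℚ) x p = 0 := hp
  obtain ⟨c, hcu, hmem⟩ := exists_decomposition p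
  have hq0 : aeval (R := ℚ) x (p - ∑ S : Finset (Fin d), c S • ∏ i ∈ S, X i) = 0 :=
    hle hmem
  have hsum : ∑ S : Finset (Fin d), c S • ∏ i ∈ S, x i = 0 := by
    have : aeval (R := ℚ) x (∑ S : Finset (Fin d), c S • ∏ i ∈ S, X i)
        = ∑ S : Finset (Fin d), c S • ∏ i ∈ S, x i := by
      rw [map_sum]
      refine Finset.sum_congr rfl (fun S _ => ?_)
      rw [map_smul, map_prod]
      simp
    rw [map_sub, hp0, zero_sub, neg_eq_zero, this] at hq0
    exact hq0
  have hall : ∀ S, c S = 0 := coeffs_eq_zero x hsq htop hind c hcu hsum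
  have : (∑ S : Finset (Fin d), c S • ∏ i ∈ S, (X i : MvPolynomial (Fin d) ℚ)) = 0 := by
    refine Finset.sum_eq_zero (fun S _ => ?_)
    rw [hall S, zero_smul]
  rw [this, sub_zero] at hmem
  exact hmem
end
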